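/- For every natural number a ≥ 1, every integer k with 0 ≤ k ≤ a, and every λ ∈ [0,1], one has sqrt(a·λ(1-λ)) · C(a,k) λ^k (1-λ)^{a-k} ≤ 1/√(2e). -/

import Mathlib

open Real Stirling Filter Nat

lemma sqrtPi_le_stirlingSeq {n : ℕ} (hn : 1 ≤ n) : Real.sqrt π ≤ stirlingSeq n := by
  obtain ⟨m, rfl⟩ : ∃ m, n = m + 1 := ⟨n - 1, by omega⟩
  exact stirlingSeq'_antitone.le_of_tendsto
    (tendsto_stirlingSeq_sqrt_pi.comp (tendsto_add_atTop_nat 1)) m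

lemma stirlingSeq_anti {m n : ℕ} (hm : 1 ≤ m) (h : m ≤ n) : stirlingSeq n ≤ stirlingSeq m := by
  obtain ⟨i, rfl⟩ : ∃ i, m = i + 1 := ⟨m - 1, by omega⟩
  obtain ⟨i', rfl⟩ : ∃ i', n = i' + 1 := ⟨n - 1, by omega⟩
  exact stirlingSeq'_antitone (by omega)

lemma fact_sq_lower {n : ℕ} (hn : 1 ≤ n) :
    π * (2 * n) * ((n : ℝ) / exp 1) ^ (2 * n) ≤ ((n ! : ℕ) : ℝ) ^ 2 := by
  have hn0 : (0:ℝ) < n := by exact_mod_cast hn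
  have hD : (0:ℝ) < Real.sqrt (2 * n) * ((n : ℝ) / exp 1) ^ n := by positivity
  have h := sqrtPi_le_stirlingSeq hn
  rw [stirlingSeq, le_div_iff₀ hD] at h
  have h2 : (Real.sqrt π * (Real.sqrt (2 * n) * ((n : ℝ) / exp 1) ^ n)) ^ 2
      ≤ ((n ! : ℕ) : ℝ) ^ 2 := by
    apply pow_le_pow_left₀ (by positivity) h
  calc π * (2 * n) * ((n : ℝ) / exp 1) ^ (2 * n)
      = (Real.sqrt π * (Real.sqrt (2 * n) * ((n : ℝ) / exp 1) ^ n)) ^ 2 := by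
        rw [mul_pow, mul_pow, ← pow_mul, Real.sq_sqrt pi_pos.le,
          Real.sq_sqrt (by positivity : (0:ℝ) ≤ 2 * n)]
        ring
    _ ≤ _ := h2

lemma fact_eq (n : ℕ) (hn : 1 ≤ n) :
    ((n ! : ℕ) : ℝ) = stirlingSeq n * (Real.sqrt (2 * n) * ((n : ℝ) / exp 1) ^ n) := by
  have hn0 : (0:ℝ) < n := by exact_mod_cast hn
  have hD : (0:ℝ) < Real.sqrt (2 * n) * ((n : ℝ) / exp 1) ^ n := by positivity
  rw [stirlingSeq, div_mul_cancel₀]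
  exact hD.ne'

lemma s12_le : stirlingSeq 12 ≤ 1.785 := by
  have heb : exp 1 < 2.7182818286 := exp_one_lt_d9
  have he : (0:ℝ) < exp 1 := exp_pos 1
  have h2 : ((2:ℝ) * ((12:ℕ):ℝ)) = 24 := by norm_num
  rw [stirlingSeq, h2, div_le_iff₀ (by positivity)]
  have hs : (4.898979485 : ℝ) ≤ Real.sqrt 24 := by
    nlinarith [Real.sq_sqrt (by norm_num : (0:ℝ) ≤ 24), Real.sqrt_nonneg (24:ℝ)]
  calc ((12 ! : ℕ) : ℝ) ≤ 1.785 * (4.898979485 * ((12:ℝ) ^ 12 / 2.7182818286 ^ 12)) := by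
        norm_num [Nat.factorial]
    _ ≤ 1.785 * (Real.sqrt 24 * (((12:ℕ):ℝ) / exp 1) ^ 12) := by
        have hq : (12:ℝ) ^ 12 / 2.7182818286 ^ 12 ≤ (((12:ℕ):ℝ) / exp 1) ^ 12 := by
          rw [div_pow]
          push_cast
          gcongr
        gcongr

lemma fact_sq_upper {n : ℕ} (hn : 12 ≤ n) :
    ((n ! : ℕ) : ℝ) ^ 2 ≤ 1.785 ^ 2 * (2 * n * ((n : ℝ) / exp 1) ^ (2 * n)) := by
  have hs : stirlingSeq n ≤ 1.785 := (stirlingSeq_anti (by norm_num) hn).trans s12_le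
  have hs0 : 0 ≤ stirlingSeq n := by
    obtain ⟨m, rfl⟩ : ∃ m, n = m + 1 := ⟨n - 1, by omega⟩
    exact (stirlingSeq'_pos m).le
  rw [fact_eq n (by omega), mul_pow, mul_pow, ← pow_mul,
    Real.sq_sqrt (by positivity : (0:ℝ) ≤ 2 * (n:ℝ))]
  rw [show n * 2 = 2 * n by ring]
  have hb : stirlingSeq n ^ 2 ≤ 1.785 ^ 2 := pow_le_pow_left₀ hs0 hs 2
  exact mul_le_mul_of_nonneg_right hb (by positivity)

lemma edge_case (a : ℕ) (ha : 1 ≤ a) {μ : ℝ} (h0 : 0 ≤ μ) (h1 : μ ≤ 1) :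
    (a : ℝ) * (1 - μ) * μ ^ (2 * a + 1) ≤ 1 / (2 * exp 1) := by
  have hμe : μ ≤ exp (μ - 1) := by
    have := add_one_le_exp (μ - 1); linarith
  have hpow : μ ^ (2 * a + 1) ≤ exp ((μ - 1) * (2 * a + 1)) := by
    calc μ ^ (2 * a + 1) ≤ exp (μ - 1) ^ (2 * a + 1) := pow_le_pow_left₀ h0 hμe _
      _ = exp ((μ - 1) * (2 * a + 1)) := by
          rw [← Real.exp_nat_mul]; congr 1; push_cast; ring
  set t : ℝ := (2 * a + 1) * (1 - μ) with ht
  have ht0 : 0 ≤ t := by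
    have h1' : (0:ℝ) ≤ 1 - μ := by linarith
    have : (0:ℝ) ≤ 2 * (a:ℝ) + 1 := by positivity
    exact mul_nonneg this h1'
  have hte : t ≤ exp (t - 1) := by
    have := add_one_le_exp (t - 1); linarith
  have key : t * exp (-t) ≤ exp (-1) := by
    calc t * exp (-t) ≤ exp (t - 1) * exp (-t) := by
          gcongr
      _ = exp (-1) := by rw [← Real.exp_add]; ring_nf
  have hexp : (μ - 1) * (2 * a + 1) = -t := by rw [ht]; ring
  have ha2 : (a : ℝ) / (2 * a + 1) ≤ 1 / 2 := by
    rw [div_le_div_iff₀ (by positivity) (by norm_num)]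
    have : (1:ℝ) ≤ a := by exact_mod_cast ha
    linarith
  have hsplit : (a : ℝ) * (1 - μ) = ((a : ℝ) / (2 * a + 1)) * t := by
    rw [ht]; field_simp
  calc (a : ℝ) * (1 - μ) * μ ^ (2 * a + 1)
      ≤ (a : ℝ) * (1 - μ) * exp ((μ - 1) * (2 * a + 1)) := by
        have : (0:ℝ) ≤ (a : ℝ) * (1 - μ) := by
          have : (0:ℝ) ≤ (a:ℝ) := by positivity
          nlinarith
        exact mul_le_mul_of_nonneg_left hpow this
    _ = ((a : ℝ) / (2 * a + 1)) * (t * exp (-t)) := by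
        rw [hexp, hsplit]; ring
    _ ≤ (1 / 2) * exp (-1) := by
        apply mul_le_mul ha2 key (by positivity)
        norm_num
    _ = 1 / (2 * exp 1) := by
        rw [Real.exp_neg]; field_simp

lemma amgm {m n : ℕ} (hm : 0 < m) (hn : 0 < n) {x : ℝ} (h0 : 0 ≤ x) (h1 : x ≤ 1) :
    x ^ m * (1 - x) ^ n ≤ (m : ℝ) ^ m * (n : ℝ) ^ n / ((m : ℝ) + n) ^ (m + n) := by
  have hM : (0:ℝ) < m := by exact_mod_cast hm
  have hN : (0:ℝ) < n := by exact_mod_cast hn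
  have hS : (0:ℝ) < (m:ℝ) + n := by linarith
  have hx1 : (0:ℝ) ≤ 1 - x := by linarith
  set p₁ : ℝ := x * ((m:ℝ) + n) / m with hp₁
  set p₂ : ℝ := (1 - x) * ((m:ℝ) + n) / n with hp₂
  have hp₁0 : 0 ≤ p₁ := by positivity
  have hp₂0 : 0 ≤ p₂ := by positivity
  have key : p₁ ^ ((m:ℝ) / ((m:ℝ) + n)) * p₂ ^ ((n:ℝ) / ((m:ℝ) + n)) ≤ 1 := by
    have h := Real.geom_mean_le_arith_mean2_weighted
      (by positivity : (0:ℝ) ≤ (m:ℝ) / ((m:ℝ) + n))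
      (by positivity : (0:ℝ) ≤ (n:ℝ) / ((m:ℝ) + n)) hp₁0 hp₂0
      (by field_simp)
    refine h.trans_eq ?_
    rw [hp₁, hp₂]
    field_simp
    ring
  have key2 : p₁ ^ m * p₂ ^ n ≤ 1 := by
    have hr : (p₁ ^ ((m:ℝ) / ((m:ℝ) + n)) * p₂ ^ ((n:ℝ) / ((m:ℝ) + n))) ^ ((m:ℝ) + n) ≤ 1 := by
      calc (p₁ ^ ((m:ℝ) / ((m:ℝ) + n)) * p₂ ^ ((n:ℝ) / ((m:ℝ) + n))) ^ ((m:ℝ) + n)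
          ≤ 1 ^ ((m:ℝ) + n) := by
            apply Real.rpow_le_rpow (by positivity) key hS.le
        _ = 1 := Real.one_rpow _
    rw [Real.mul_rpow (by positivity) (by positivity), ← Real.rpow_mul hp₁0,
      ← Real.rpow_mul hp₂0, div_mul_cancel₀ _ hS.ne', div_mul_cancel₀ _ hS.ne',
      Real.rpow_natCast, Real.rpow_natCast] at hr
    exact hr
  rw [le_div_iff₀ (by positivity)]
  have expand : p₁ ^ m * p₂ ^ n
      = x ^ m * (1 - x) ^ n * ((m:ℝ) + n) ^ (m + n) / ((m:ℝ) ^ m * (n:ℝ) ^ n) := by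
    rw [hp₁, hp₂, div_pow, div_pow, mul_pow, mul_pow, pow_add]
    field_simp
  rw [expand, div_le_one (by positivity)] at key2
  exact key2

lemma epow_helper (q r : ℝ) (n : ℕ) (h : q ≤ r * 2.7182818283 ^ n) (hr : 0 ≤ r) :
    q ≤ r * exp 1 ^ n := by
  refine h.trans ?_
  gcongr
  exact exp_one_gt_d9.le

lemma v_le {k : ℕ} (hk : 1 ≤ k) :
    ((2 * k + 1 : ℝ)) ^ (2 * k + 1)
      ≤ (0.921 * 2 ^ (2 * k) * ((k ! : ℕ) : ℝ) ^ 2) * exp 1 ^ (2 * k) := by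
  rcases le_or_gt k 8 with h8 | h9
  · interval_cases k <;>
      (apply epow_helper <;> norm_num [Nat.factorial])
  · have hk0 : (0:ℝ) < k := by positivity
    have h2k : (18:ℝ) ≤ 2 * k := by
      have : (9:ℝ) ≤ k := by exact_mod_cast h9
      linarith
    have hfl := fact_sq_lower hk
    have hstep1 : (0.921 * π * (2 * (k:ℝ)) ^ (2 * k + 1))
        ≤ (0.921 * 2 ^ (2 * k) * ((k ! : ℕ) : ℝ) ^ 2) * exp 1 ^ (2 * k) := by
      have hkey : (2 * (k:ℝ)) ^ (2 * k + 1) = 2 ^ (2 * k) * (2 * (k:ℝ)) * (k:ℝ) ^ (2 * k) := by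
        rw [pow_succ, mul_pow]
        ring
      have hcancel : ((k:ℝ) / exp 1) ^ (2 * k) * exp 1 ^ (2 * k) = (k:ℝ) ^ (2 * k) := by
        rw [div_pow, div_mul_cancel₀]
        positivity
      calc 0.921 * π * (2 * (k:ℝ)) ^ (2 * k + 1)
          = 0.921 * 2 ^ (2 * k) * (π * (2 * (k:ℝ)) * (((k:ℝ) / exp 1) ^ (2 * k) * exp 1 ^ (2 * k))) := by
            rw [hcancel, hkey]; ring
        _ ≤ 0.921 * 2 ^ (2 * k) * (((k ! : ℕ) : ℝ) ^ 2 * exp 1 ^ (2 * k)) := by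
            apply mul_le_mul_of_nonneg_left _ (by positivity)
            calc π * (2 * (k:ℝ)) * (((k:ℝ) / exp 1) ^ (2 * k) * exp 1 ^ (2 * k))
                = (π * (2 * (k:ℝ)) * ((k:ℝ) / exp 1) ^ (2 * k)) * exp 1 ^ (2 * k) := by ring
              _ ≤ ((k ! : ℕ) : ℝ) ^ 2 * exp 1 ^ (2 * k) :=
                  mul_le_mul_of_nonneg_right hfl (by positivity)
        _ = (0.921 * 2 ^ (2 * k) * ((k ! : ℕ) : ℝ) ^ 2) * exp 1 ^ (2 * k) := by ring
    refine le_trans ?_ hstep1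
    -- (2k+1)^(2k+1) ≤ 0.921 * π * (2k)^(2k+1)
    have hsplit : (2 * (k:ℝ) + 1) = (2 * (k:ℝ)) * (1 + 1 / (2 * (k:ℝ))) := by
      field_simp
    have hb1 : (1 + 1 / (2 * (k:ℝ))) ^ (2 * k) ≤ exp 1 := by
      calc (1 + 1 / (2 * (k:ℝ))) ^ (2 * k) ≤ exp (1 / (2 * (k:ℝ))) ^ (2 * k) := by
            gcongr
            have := add_one_le_exp (1 / (2 * (k:ℝ))); linarith
        _ = exp ((2 * k : ℕ) * (1 / (2 * (k:ℝ)))) := by rw [Real.exp_nat_mul]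
        _ = exp 1 := by
            congr 1
            push_cast
            field_simp
    have hb2 : (1 + 1 / (2 * (k:ℝ))) ≤ 19 / 18 := by
      have := one_div_le_one_div_of_le (by norm_num : (0:ℝ) < 18) h2k
      linarith
    have hnum : exp 1 * (19 / 18) ≤ 0.921 * π := by
      have h1 := exp_one_lt_d9
      have h2 := pi_gt_d6
      nlinarith
    calc (2 * (k:ℝ) + 1) ^ (2 * k + 1)
        = (2 * (k:ℝ)) ^ (2 * k + 1) * ((1 + 1 / (2 * (k:ℝ))) ^ (2 * k) * (1 + 1 / (2 * (k:ℝ)))) := by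
          rw [hsplit, mul_pow, pow_succ]
          ring
      _ ≤ (2 * (k:ℝ)) ^ (2 * k + 1) * (exp 1 * (19 / 18)) := by
          apply mul_le_mul_of_nonneg_left _ (by positivity)
          exact mul_le_mul hb1 hb2 (by positivity) (exp_pos 1).le
      _ ≤ (2 * (k:ℝ)) ^ (2 * k + 1) * (0.921 * π) := by gcongr
      _ = 0.921 * π * (2 * (k:ℝ)) ^ (2 * k + 1) := by ring

lemma num_final {r : ℝ} (h0 : 0 ≤ r) (h : r * 5.4365636572 ≤ 1) : r ≤ 1 / (2 * exp 1) := by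
  rw [le_div_iff₀ (by positivity)]
  have h2 : 2 * exp 1 ≤ 5.4365636572 := by nlinarith [exp_one_lt_d9]
  nlinarith [exp_pos 1]

lemma star_large {a k j : ℕ} (ha : 12 ≤ a) (hk : 1 ≤ k) (hj : 1 ≤ j) (hkj : k + j = a) :
    ((a : ℝ) * ((a.choose k : ℕ) : ℝ) ^ 2) *
      ((2 * (k:ℝ) + 1) ^ (2 * k + 1) * (2 * (j:ℝ) + 1) ^ (2 * j + 1) / (2 * (a:ℝ) + 2) ^ (2 * a + 2))
    ≤ 1 / (2 * exp 1) := by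
  have hka : k ≤ a := by omega
  have hC : ((a.choose k : ℕ) : ℝ) = ((a ! : ℕ) : ℝ) / (((k ! : ℕ) : ℝ) * ((j ! : ℕ) : ℝ)) := by
    rw [Nat.cast_choose ℝ hka, show a - k = j from by omega]
  have hfk : (0:ℝ) < ((k ! : ℕ) : ℝ) := by exact_mod_cast k.factorial_pos
  have hfj : (0:ℝ) < ((j ! : ℕ) : ℝ) := by exact_mod_cast j.factorial_pos
  have hfa : (0:ℝ) < ((a ! : ℕ) : ℝ) := by exact_mod_cast a.factorial_pos
  have ha0 : (0:ℝ) < a := by positivity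
  have hD : (0:ℝ) < (2 * (a:ℝ) + 2) ^ (2 * a + 2) := by positivity
  have he : (0:ℝ) < exp 1 := exp_pos 1
  have eq1 : ((a : ℝ) * ((a.choose k : ℕ) : ℝ) ^ 2) *
      ((2 * (k:ℝ) + 1) ^ (2 * k + 1) * (2 * (j:ℝ) + 1) ^ (2 * j + 1) / (2 * (a:ℝ) + 2) ^ (2 * a + 2))
      = ((a : ℝ) * ((a ! : ℕ) : ℝ) ^ 2 * (2 * (k:ℝ) + 1) ^ (2 * k + 1) * (2 * (j:ℝ) + 1) ^ (2 * j + 1)) /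
        (((k ! : ℕ) : ℝ) ^ 2 * ((j ! : ℕ) : ℝ) ^ 2 * (2 * (a:ℝ) + 2) ^ (2 * a + 2)) := by
    rw [hC]
    field_simp
  rw [eq1]
  have step2 : ((a : ℝ) * ((a ! : ℕ) : ℝ) ^ 2 * (2 * (k:ℝ) + 1) ^ (2 * k + 1) * (2 * (j:ℝ) + 1) ^ (2 * j + 1)) /
        (((k ! : ℕ) : ℝ) ^ 2 * ((j ! : ℕ) : ℝ) ^ 2 * (2 * (a:ℝ) + 2) ^ (2 * a + 2))
      ≤ ((a : ℝ) * (1.785 ^ 2 * (2 * (a:ℝ) * ((a : ℝ) / exp 1) ^ (2 * a)))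
          * ((0.921 * 2 ^ (2 * k) * ((k ! : ℕ) : ℝ) ^ 2) * exp 1 ^ (2 * k))
          * ((0.921 * 2 ^ (2 * j) * ((j ! : ℕ) : ℝ) ^ 2) * exp 1 ^ (2 * j))) /
        (((k ! : ℕ) : ℝ) ^ 2 * ((j ! : ℕ) : ℝ) ^ 2 * (2 * (a:ℝ) + 2) ^ (2 * a + 2)) := by
    gcongr
    · exact fact_sq_upper ha
    · exact v_le hk
    · exact v_le hj
  refine step2.trans ?_
  have eq3 : ((a : ℝ) * (1.785 ^ 2 * (2 * (a:ℝ) * ((a : ℝ) / exp 1) ^ (2 * a)))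
          * ((0.921 * 2 ^ (2 * k) * ((k ! : ℕ) : ℝ) ^ 2) * exp 1 ^ (2 * k))
          * ((0.921 * 2 ^ (2 * j) * ((j ! : ℕ) : ℝ) ^ 2) * exp 1 ^ (2 * j))) /
        (((k ! : ℕ) : ℝ) ^ 2 * ((j ! : ℕ) : ℝ) ^ 2 * (2 * (a:ℝ) + 2) ^ (2 * a + 2))
      = 1.785 ^ 2 * 0.921 ^ 2 / 2 * (((a:ℝ) / ((a:ℝ) + 1)) ^ (a + 1)) ^ 2 := by
    subst hkj
    push_cast
    rw [show (2 * ((k:ℝ) + (j:ℝ)) + 2) = 2 * ((k:ℝ) + (j:ℝ) + 1) by ring, mul_pow]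
    obtain ⟨E, hE, hE0⟩ : ∃ E : ℝ, exp 1 = E ∧ 0 < E := ⟨exp 1, rfl, exp_pos 1⟩
    rw [hE]
    have hkj1 : (0:ℝ) < (k:ℝ) + (j:ℝ) + 1 := by positivity
    simp only [div_pow]
    field_simp
    ring
  rw [eq3]
  have hbase : ((a:ℝ) / ((a:ℝ) + 1)) ^ (a + 1) ≤ exp (-1) := by
    have ha1 : (0:ℝ) < (a:ℝ) + 1 := by positivity
    have h1 : (a:ℝ) / ((a:ℝ) + 1) ≤ exp (-(1 / ((a:ℝ) + 1))) := by
      have := add_one_le_exp (-(1 / ((a:ℝ) + 1)))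
      have heq : (a:ℝ) / ((a:ℝ) + 1) = 1 - 1 / ((a:ℝ) + 1) := by field_simp; ring
      linarith
    calc ((a:ℝ) / ((a:ℝ) + 1)) ^ (a + 1) ≤ exp (-(1 / ((a:ℝ) + 1))) ^ (a + 1) := by
          gcongr
      _ = exp (((a:ℕ) + 1 : ℕ) * (-(1 / ((a:ℝ) + 1)))) := by rw [Real.exp_nat_mul]
      _ = exp (-1) := by
          congr 1
          push_cast
          field_simp
  calc 1.785 ^ 2 * 0.921 ^ 2 / 2 * (((a:ℝ) / ((a:ℝ) + 1)) ^ (a + 1)) ^ 2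
      ≤ 1.785 ^ 2 * 0.921 ^ 2 / 2 * (exp (-1)) ^ 2 := by
        gcongr
    _ ≤ 1 / (2 * exp 1) := by
        rw [Real.exp_neg]
        have key : (1.785:ℝ) ^ 2 * 0.921 ^ 2 ≤ exp 1 := by nlinarith [exp_one_gt_d9]
        calc 1.785 ^ 2 * 0.921 ^ 2 / 2 * ((exp 1)⁻¹) ^ 2
            ≤ exp 1 / 2 * ((exp 1)⁻¹) ^ 2 := by gcongr
          _ = 1 / (2 * exp 1) := by
              rw [pow_two]
              field_simp

set_option maxHeartbeats 3000000 in
lemma star_small {a k j : ℕ} (ha : a ≤ 11) (hk : 1 ≤ k) (hj : 1 ≤ j) (hkj : k + j = a) :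
    ((a : ℝ) * ((a.choose k : ℕ) : ℝ) ^ 2) *
      ((2 * (k:ℝ) + 1) ^ (2 * k + 1) * (2 * (j:ℝ) + 1) ^ (2 * j + 1) / (2 * (a:ℝ) + 2) ^ (2 * a + 2))
    ≤ 1 / (2 * exp 1) := by
  subst hkj
  have hk11 : k ≤ 10 := by omega
  have hj11 : j ≤ 10 := by omega
  apply num_final
  · positivity
  · interval_cases k <;> interval_cases j <;> norm_num [Nat.choose]

lemma core (a k : ℕ) (ha : 1 ≤ a) (hk : k ≤ a) {lam : ℝ} (h0 : 0 ≤ lam) (h1 : lam ≤ 1) :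
    (a:ℝ) * lam * (1 - lam) * (((a.choose k : ℕ):ℝ) * lam ^ k * (1 - lam) ^ (a - k)) ^ 2
      ≤ 1 / (2 * exp 1) := by
  have hq0 : (0:ℝ) ≤ 1 - lam := by linarith
  rcases Nat.eq_zero_or_pos k with hk0 | hkpos
  · subst hk0
    rw [Nat.choose_zero_right, Nat.sub_zero]
    push_cast
    have h := edge_case a ha hq0 (by linarith : 1 - lam ≤ 1)
    calc (a:ℝ) * lam * (1 - lam) * ((1:ℝ) * lam ^ 0 * (1 - lam) ^ a) ^ 2
        = (a:ℝ) * (1 - (1 - lam)) * (1 - lam) ^ (2 * a + 1) := by ring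
      _ ≤ 1 / (2 * exp 1) := h
  rcases eq_or_lt_of_le hk with hka | hklt
  · subst hka
    rw [Nat.choose_self, Nat.sub_self]
    push_cast
    have h := edge_case k ha h0 h1
    calc (k:ℝ) * lam * (1 - lam) * ((1:ℝ) * lam ^ k * (1 - lam) ^ 0) ^ 2
        = (k:ℝ) * (1 - lam) * lam ^ (2 * k + 1) := by ring
      _ ≤ 1 / (2 * exp 1) := h
  · set j := a - k with hj
    have hkj : k + j = a := by omega
    have hj1 : 1 ≤ j := by omega
    have ham := amgm (m := 2 * k + 1) (n := 2 * j + 1) (by omega) (by omega) h0 h1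
    have hC0 : (0:ℝ) ≤ ((a.choose k : ℕ):ℝ) := by positivity
    have key : (a:ℝ) * lam * (1 - lam) * (((a.choose k : ℕ):ℝ) * lam ^ k * (1 - lam) ^ j) ^ 2
        ≤ ((a : ℝ) * ((a.choose k : ℕ) : ℝ) ^ 2) *
          ((2 * (k:ℝ) + 1) ^ (2 * k + 1) * (2 * (j:ℝ) + 1) ^ (2 * j + 1)
            / (2 * (a:ℝ) + 2) ^ (2 * a + 2)) := by
      have hcast : ((2 * k + 1 : ℕ) : ℝ) = 2 * (k:ℝ) + 1 := by push_cast; ring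
      have hcast2 : ((2 * j + 1 : ℕ) : ℝ) = 2 * (j:ℝ) + 1 := by push_cast; ring
      have hsum : ((2 * k + 1 : ℕ) : ℝ) + ((2 * j + 1 : ℕ) : ℝ) = 2 * (a:ℝ) + 2 := by
        push_cast
        have : (a:ℝ) = (k:ℝ) + (j:ℝ) := by exact_mod_cast hkj.symm
        rw [this]; ring
      have hexp : (2 * k + 1) + (2 * j + 1) = 2 * a + 2 := by omega
      rw [hsum, hexp, hcast, hcast2] at ham
      calc (a:ℝ) * lam * (1 - lam) * (((a.choose k : ℕ):ℝ) * lam ^ k * (1 - lam) ^ j) ^ 2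
          = ((a : ℝ) * ((a.choose k : ℕ) : ℝ) ^ 2) * (lam ^ (2 * k + 1) * (1 - lam) ^ (2 * j + 1)) := by
            ring
        _ ≤ ((a : ℝ) * ((a.choose k : ℕ) : ℝ) ^ 2) *
            ((2 * (k:ℝ) + 1) ^ (2 * k + 1) * (2 * (j:ℝ) + 1) ^ (2 * j + 1)
              / (2 * (a:ℝ) + 2) ^ (2 * a + 2)) := by
            apply mul_le_mul_of_nonneg_left _ (by positivity)
            exact ham.trans_eq (by rw [div_eq_div_iff] <;> positivity)
    refine key.trans ?_
    rcases le_or_gt a 11 with hsmall | hlarge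
    · exact star_small hsmall hkpos hj1 hkj
    · exact star_large (by omega) hkpos hj1 hkj

theorem single_binomial_bound (a : ℕ) (ha : 1 ≤ a) (k : ℕ) (hk : k ≤ a)
    (lam : ℝ) (hlam : lam ∈ Set.Icc (0 : ℝ) 1) :
    Real.sqrt (a * lam * (1 - lam)) *
      ((a.choose k : ℝ) * lam ^ k * (1 - lam) ^ (a - k))
    ≤ 1 / Real.sqrt (2 * Real.exp 1) := by
  obtain ⟨h0, h1⟩ := hlam
  have hq0 : (0:ℝ) ≤ 1 - lam := by linarith
  have hX0 : (0:ℝ) ≤ (a.choose k : ℝ) * lam ^ k * (1 - lam) ^ (a - k) :=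
    mul_nonneg (mul_nonneg (by positivity) (pow_nonneg h0 k)) (pow_nonneg hq0 _)
  have hbase : (0:ℝ) ≤ (a:ℝ) * lam * (1 - lam) :=
    mul_nonneg (mul_nonneg (Nat.cast_nonneg a) h0) hq0
  have hcore := core a k ha hk h0 h1
  calc Real.sqrt ((a:ℝ) * lam * (1 - lam)) * ((a.choose k : ℝ) * lam ^ k * (1 - lam) ^ (a - k))
      = Real.sqrt ((a:ℝ) * lam * (1 - lam) *
          ((a.choose k : ℝ) * lam ^ k * (1 - lam) ^ (a - k)) ^ 2) := by
        rw [Real.sqrt_mul hbase, Real.sqrt_sq hX0]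
    _ ≤ Real.sqrt (1 / (2 * exp 1)) := Real.sqrt_le_sqrt hcore
    _ = 1 / Real.sqrt (2 * exp 1) := by
        rw [one_div, one_div, Real.sqrt_inv]
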